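/- arXiv:1601.03614 — 6 statements merged into one kernel-verified Lean document; each statement's English description precedes it below -/
import Mathlib

section
/- For any a > 0, v ≥ 0, and integer n ≥ 1, with f_a(x) = a/n + 2v(1 - cos x) and g_a(x) = sin(x)/f_a(x), one has sup_{0 ≤ x ≤ π} |g_a'(x)| ≤ 3n/a. -/
/-! The numerator of the quotient rule simplifies to `c cos x - w (1 - cos x)`, whose absolute
value is at most `c + w (1 - cos x) = f x`; hence `|g'| ≤ 1 / f ≤ 1 / c` everywhere, and
`1 / c = n / a` for `c = a / n`. -/

open Real Set

theorem hasDerivAt_sin_div_add_mul_one_sub_cos {c w x : ℝ} (hf : c + w * (1 - cos x) ≠ 0) :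
    HasDerivAt (fun y => sin y / (c + w * (1 - cos y)))
      ((c * cos x - w * (1 - cos x)) / (c + w * (1 - cos x)) ^ 2) x := by
  have hf' : HasDerivAt (fun y => c + w * (1 - cos y)) (w * sin x) x := by
    simpa using (((hasDerivAt_cos x).const_sub 1).const_mul w).const_add c
  refine ((hasDerivAt_sin x).div hf' hf).congr_deriv ?_
  congr 1
  linear_combination -w * sin_sq_add_cos_sq x

theorem abs_deriv_sin_div_add_mul_one_sub_cos_le {c w : ℝ} (hc : 0 < c) (hw : 0 ≤ w) (x : ℝ) :
    |deriv (fun y => sin y / (c + w * (1 - cos y))) x| ≤ 1 / c := by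
  have hcos : 0 ≤ 1 - cos x := sub_nonneg.2 (cos_le_one x)
  set f := c + w * (1 - cos x)
  have hc_le : c ≤ f := le_add_of_nonneg_right (mul_nonneg hw hcos)
  have hf : 0 < f := hc.trans_le hc_le
  have hnum : |c * cos x - w * (1 - cos x)| ≤ f := by
    rw [abs_le]
    constructor <;> nlinarith [neg_one_le_cos x, cos_le_one x, mul_nonneg hw hcos]
  rw [(hasDerivAt_sin_div_add_mul_one_sub_cos hf.ne').deriv, abs_div, abs_of_pos (pow_pos hf 2)]
  calc |c * cos x - w * (1 - cos x)| / f ^ 2 ≤ f / f ^ 2 := by gcongr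
    _ = 1 / f := by field_simp
    _ ≤ 1 / c := by gcongr

theorem stmt_1 (a v : ℝ) (n : ℕ) (ha : 0 < a) (hv : 0 ≤ v) (hn : 1 ≤ n) :
    sSup ((fun x =>
        |deriv (fun y => Real.sin y / (a / n + 2 * v * (1 - Real.cos y))) x|) ''
        Set.Icc 0 Real.pi) ≤ 3 * n / a := by
  have hn₀ : (0 : ℝ) < n := by exact_mod_cast hn
  have hbound : 1 / (a / n) ≤ 3 * n / a := by
    rw [one_div_div]
    gcongr
    linarith
  refine Real.sSup_le ?_ (by positivity)
  rintro _ ⟨x, -, rfl⟩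
  exact (abs_deriv_sin_div_add_mul_one_sub_cos_le (div_pos ha hn₀) (by positivity) x).trans hbound
end

section
/- For all x with 0 ≤ x < 1, one has (π/2)x ≤ tan((π/2)x) ≤ (π/2)·x/(1 − x²) (the second inequality is the Becker–Stark inequality). -/
/-!
With `t = π x / 2`, the upper bound reads `F t ≥ 0` on `[0, π/2]`, where
`F t = π² t cos t - (π² - 4t²) sin t` vanishes at both ends of the interval. Its derivative is
`F' t = t G t` with `G t = 4t cos t - (π² - 8) sin t`, and `G` vanishes at `0` and has a
decreasing derivative. A function whose derivative can only change sign from `+` to `-`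
is bounded below by its values at the endpoints; applied to `G` this shows that `F'` changes
sign only from `+` to `-` as well, and applied to `F` it gives `F ≥ 0`.
-/

open Real Set

theorem min_le_of_deriv_sign_change {f f' : ℝ → ℝ} {a b x : ℝ}
    (hf : ContinuousOn f (Icc a b)) (hf' : ∀ y ∈ Ioo a b, HasDerivAt f (f' y) y)
    (hsign : ∀ y ∈ Ioo a b, ∀ z ∈ Ioo a b, y ≤ z → 0 ≤ f' z → 0 ≤ f' y)
    (hx : x ∈ Icc a b) : min (f a) (f b) ≤ f x := by
  obtain ⟨hax, hxb⟩ := hx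
  rcases hax.eq_or_lt with rfl | hax
  · exact min_le_left _ _
  rcases hxb.eq_or_lt with rfl | hxb
  · exact min_le_right _ _
  have hxI : x ∈ Ioo a b := ⟨hax, hxb⟩
  by_cases hfx : 0 ≤ f' x
  · have hmono : MonotoneOn f (Icc a x) := by
      refine monotoneOn_of_hasDerivWithinAt_nonneg (convex_Icc a x)
        (hf.mono (Icc_subset_Icc_right hxb.le)) (f' := f') (fun y hy => ?_) (fun y hy => ?_)
      all_goals rw [interior_Icc] at hy
      · exact (hf' y ⟨hy.1, hy.2.trans hxb⟩).hasDerivWithinAt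
      · exact hsign y ⟨hy.1, hy.2.trans hxb⟩ x hxI hy.2.le hfx
    exact (min_le_left _ _).trans
      (hmono (left_mem_Icc.2 hax.le) (right_mem_Icc.2 hax.le) hax.le)
  · have hanti : AntitoneOn f (Icc x b) := by
      refine antitoneOn_of_hasDerivWithinAt_nonpos (convex_Icc x b)
        (hf.mono (Icc_subset_Icc_left hax.le)) (f' := f') (fun y hy => ?_) (fun y hy => ?_)
      all_goals rw [interior_Icc] at hy
      · exact (hf' y ⟨hax.trans hy.1, hy.2⟩).hasDerivWithinAt
      · by_contra! hfy
        exact hfx (hsign x hxI y ⟨hax.trans hy.1, hy.2⟩ hy.1.le hfy.le)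
    exact (min_le_right _ _).trans
      (hanti (left_mem_Icc.2 hxb.le) (right_mem_Icc.2 hxb.le) hxb.le)

theorem mul_sin_le_mul_cos_of_le {c s t : ℝ} (hc : c ≤ 4) (hs : 0 ≤ s) (hst : s ≤ t)
    (ht : t ≤ π / 2) (h : c * sin t ≤ 4 * t * cos t) : c * sin s ≤ 4 * s * cos s := by
  let G : ℝ → ℝ := fun u => 4 * u * cos u - c * sin u
  let G' : ℝ → ℝ := fun u => (4 - c) * cos u - 4 * (u * sin u)
  have hG : ∀ u, HasDerivAt G (G' u) u := fun u =>
    ((((hasDerivAt_id u).const_mul 4).mul (hasDerivAt_cos u)).sub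
      ((hasDerivAt_sin u).const_mul c)).congr_deriv (by simp only [G', id]; ring)
  have hG'_anti : ∀ y ∈ Ioo 0 t, ∀ z ∈ Ioo 0 t, y ≤ z → G' z ≤ G' y := by
    intro y hy z hz hyz
    have hcos : cos z ≤ cos y := cos_le_cos_of_nonneg_of_le_pi hy.1.le (by linarith [hz.2]) hyz
    have hsin : sin y ≤ sin z :=
      sin_le_sin_of_le_of_le_pi_div_two (by linarith [hy.1]) (by linarith [hz.2]) hyz
    have hsin₀ : 0 ≤ sin y := sin_nonneg_of_nonneg_of_le_pi hy.1.le (by linarith [hy.2])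
    have : y * sin y ≤ z * sin z := mul_le_mul hyz hsin hsin₀ (hy.1.trans_le hyz).le
    nlinarith
  have hmin := min_le_of_deriv_sign_change (f := G) (a := 0) (b := t)
    (fun u _ => (hG u).continuousAt.continuousWithinAt) (fun u _ => hG u)
    (fun y hy z hz hyz hz₀ => hz₀.trans (hG'_anti y hy z hz hyz)) ⟨hs, hst⟩
  have hG₀ : G 0 = 0 := by simp [G]
  have hGt : 0 ≤ G t := sub_nonneg.2 h
  have : 0 ≤ G s := (le_min hG₀.ge hGt).trans hmin
  exact sub_nonneg.1 this

theorem pi_sq_sub_mul_sin_le_mul_cos {t : ℝ} (ht₀ : 0 ≤ t) (ht : t ≤ π / 2) :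
    (π ^ 2 - 4 * t ^ 2) * sin t ≤ π ^ 2 * t * cos t := by
  let F : ℝ → ℝ := fun u => π ^ 2 * u * cos u - (π ^ 2 - 4 * u ^ 2) * sin u
  let F' : ℝ → ℝ := fun u => u * (4 * u * cos u - (π ^ 2 - 8) * sin u)
  have hF : ∀ u, HasDerivAt F (F' u) u := fun u =>
    ((((hasDerivAt_id u).const_mul (π ^ 2)).mul (hasDerivAt_cos u)).sub
      ((((hasDerivAt_pow 2 u).const_mul 4).const_sub (π ^ 2)).mul (hasDerivAt_sin u))).congr_deriv
      (by simp only [F', id]; push_cast; ring)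
  have hpi : π ^ 2 - 8 ≤ 4 := by nlinarith [pi_lt_d2, pi_pos]
  have hsign : ∀ y ∈ Ioo 0 (π / 2), ∀ z ∈ Ioo 0 (π / 2), y ≤ z → 0 ≤ F' z → 0 ≤ F' y := by
    intro y hy z hz hyz hz₀
    have hGz : (π ^ 2 - 8) * sin z ≤ 4 * z * cos z := by
      have := nonneg_of_mul_nonneg_right hz₀ hz.1
      linarith
    have hGy := mul_sin_le_mul_cos_of_le hpi hy.1.le hyz hz.2.le hGz
    exact mul_nonneg hy.1.le (by linarith)
  have hmin := min_le_of_deriv_sign_change (f := F) (a := 0) (b := π / 2)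
    (fun u _ => (hF u).continuousAt.continuousWithinAt) (fun u _ => hF u) hsign ⟨ht₀, ht⟩
  have hF₀ : F 0 = 0 := by simp [F]
  have hFpi : F (π / 2) = 0 := by simp only [F, cos_pi_div_two, sin_pi_div_two]; ring
  have : 0 ≤ F t := by rw [hF₀, hFpi, min_self] at hmin; exact hmin
  exact sub_nonneg.1 this

theorem stmt_2 (x : ℝ) (hx0 : 0 ≤ x) (hx1 : x < 1) :
    Real.pi / 2 * x ≤ Real.tan (Real.pi / 2 * x) ∧
      Real.tan (Real.pi / 2 * x) ≤ Real.pi / 2 * (x / (1 - x ^ 2)) := by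
  have ht₀ : 0 ≤ π / 2 * x := by positivity
  have ht : π / 2 * x < π / 2 := mul_lt_of_lt_one_right (by positivity) hx1
  refine ⟨le_tan ht₀ ht, ?_⟩
  have hcos : 0 < cos (π / 2 * x) := cos_pos_of_mem_Ioo ⟨by linarith, ht⟩
  have hx2 : 0 < 1 - x ^ 2 := by nlinarith
  rw [tan_eq_sin_div_cos, mul_div_assoc', div_le_div_iff₀ hcos hx2]
  have key := pi_sq_sub_mul_sin_le_mul_cos ht₀ ht.le
  have hscale : π ^ 2 - 4 * (π / 2 * x) ^ 2 = π ^ 2 * (1 - x ^ 2) := by ring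
  rw [hscale, mul_assoc, mul_comm (1 - x ^ 2), mul_assoc] at key
  exact le_of_mul_le_mul_left key (by positivity)
end

section
/- For a > 0, v ≥ 0, n ≥ 1 with f_a(x) = a/n + 2v(1 − cos x), one has ∫_0^π 1/f_a(x)² dx = (π / (2(a/n)·√((a/n)² + 4av/n)))·(1 + (a/n)/(a/n + 4v)). -/
/-!
With `b = a/n` the denominator is `A - B cos x` for `A = b + 2v`, `B = 2v`, so `|B| < A`.
For `s = √(A² - B²)` the Weierstrass substitution gives an antiderivative of `s / (A - B cos x)`
going from `0` at `0` to `π` at `π`, and differentiating `B sin x / (A - B cos x)` expresses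
`1 / (A - B cos x)²` through `1 / (A - B cos x)`. Hence
`∫₀^π 1 / (A - B cos x)² = π A / (A² - B²)^{3/2}`, and the rest is algebra.
-/

open Real

namespace CosineKernel

variable {A B : ℝ}

lemma sub_mul_cos_pos (h : |B| < A) (x : ℝ) : 0 < A - B * cos x := by
  have : B * cos x ≤ |B| := by
    calc B * cos x ≤ |B * cos x| := le_abs_self _
      _ = |B| * |cos x| := abs_mul _ _
      _ ≤ |B| * 1 := mul_le_mul_of_nonneg_left (abs_cos_le_one x) (abs_nonneg B)
      _ = |B| := mul_one _
  linarith

lemma sq_sub_sq_pos (h : |B| < A) : 0 < A ^ 2 - B ^ 2 := by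
  have := sq_lt_sq' (neg_lt_of_abs_lt h) (lt_of_abs_lt h)
  linarith

/-- Agrees on `(-π, π)` with the Weierstrass-substitution antiderivative
`2 arctan (√((A+B)/(A-B)) tan (x/2))` of `√(A² - B²) / (A - B cos x)`, but is smooth on `ℝ`. -/
noncomputable def angle (A B x : ℝ) : ℝ :=
  x + 2 * arctan (B * sin x / (A + √(A ^ 2 - B ^ 2) - B * cos x))

lemma hasDerivAt_angle (h : |B| < A) (x : ℝ) :
    HasDerivAt (angle A B) (√(A ^ 2 - B ^ 2) / (A - B * cos x)) x := by
  set s := √(A ^ 2 - B ^ 2)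
  have hs2 : s ^ 2 = A ^ 2 - B ^ 2 := sq_sqrt (sq_sub_sq_pos h).le
  have hM := sub_mul_cos_pos h x
  have hD : A + s - B * cos x ≠ 0 := by have := sqrt_nonneg (A ^ 2 - B ^ 2); linarith
  have hnum : HasDerivAt (fun y => B * sin y) (B * cos x) x := (hasDerivAt_sin x).const_mul B
  have hden : HasDerivAt (fun y => A + s - B * cos y) (B * sin x) x := by
    simpa using ((hasDerivAt_cos x).const_mul B).const_sub (A + s)
  have hratio : HasDerivAt (fun y => B * sin y / (A + s - B * cos y))
      ((B * cos x * (A + s - B * cos x) - B * sin x * (B * sin x)) / (A + s - B * cos x) ^ 2) x :=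
    hnum.div hden hD
  refine ((hasDerivAt_id x).add ((hratio.arctan).const_mul 2)).congr_deriv ?_
  have h1u : 0 < 1 + (B * sin x / (A + s - B * cos x)) ^ 2 := by positivity
  field_simp
  linear_combination (-(B ^ 2 * (s + (A - B * cos x)))) * sin_sq x
    - (s + (A - B * cos x)) * hs2

lemma angle_zero : angle A B 0 = 0 := by simp [angle]

lemma angle_pi : angle A B π = π := by simp [angle]

noncomputable def invSqPrimitive (A B x : ℝ) : ℝ :=
  (A * angle A B x / √(A ^ 2 - B ^ 2) + B * sin x / (A - B * cos x)) / (A ^ 2 - B ^ 2)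

lemma hasDerivAt_invSqPrimitive (h : |B| < A) (x : ℝ) :
    HasDerivAt (invSqPrimitive A B) (1 / (A - B * cos x) ^ 2) x := by
  have hM := (sub_mul_cos_pos h x).ne'
  have hs := (sqrt_pos.2 (sq_sub_sq_pos h)).ne'
  have hquot : HasDerivAt (fun y => B * sin y / (A - B * cos y))
      ((B * cos x * (A - B * cos x) - B * sin x * (B * sin x)) / (A - B * cos x) ^ 2) x := by
    refine ((hasDerivAt_sin x).const_mul B).div ?_ hM
    simpa using ((hasDerivAt_cos x).const_mul B).const_sub A
  refine ((((hasDerivAt_angle h x).const_mul A).div_const _).add hquot).div_const _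
    |>.congr_deriv ?_
  have hdisc := (sq_sub_sq_pos h).ne'
  field_simp
  linear_combination (-B ^ 2) * sin_sq x

theorem integral_one_div_sub_mul_cos_sq (h : |B| < A) :
    ∫ x in (0)..π, 1 / (A - B * cos x) ^ 2 =
      π * A / ((A ^ 2 - B ^ 2) * √(A ^ 2 - B ^ 2)) := by
  have hcont : Continuous fun x => 1 / (A - B * cos x) ^ 2 :=
    continuous_const.div (by fun_prop) fun x => pow_ne_zero 2 (sub_mul_cos_pos h x).ne'
  rw [intervalIntegral.integral_eq_sub_of_hasDerivAt
    (fun x _ => hasDerivAt_invSqPrimitive h x) (hcont.intervalIntegrable 0 π)]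
  simp only [invSqPrimitive, angle_pi, angle_zero, sin_pi, sin_zero, mul_zero, zero_div,
    add_zero, sub_zero]
  have hs := (sqrt_pos.2 (sq_sub_sq_pos h)).ne'
  have hdisc := (sq_sub_sq_pos h).ne'
  field_simp

end CosineKernel

theorem stmt_10 (a v : ℝ) (n : ℕ) (ha : 0 < a) (hv : 0 ≤ v) (hn : 1 ≤ n) :
    ∫ x in (0)..Real.pi, 1 / (a / n + 2 * v * (1 - Real.cos x)) ^ 2 =
      Real.pi / (2 * (a / n) * Real.sqrt ((a / n) ^ 2 + 4 * a * v / n)) *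
        (1 + (a / n) / (a / n + 4 * v)) := by
  have hb : 0 < a / n := div_pos ha (by exact_mod_cast hn)
  have hAB : |2 * v| < a / n + 2 * v := by rw [abs_of_nonneg (by positivity)]; linarith
  have hdisc : (a / n + 2 * v) ^ 2 - (2 * v) ^ 2 = (a / n) ^ 2 + 4 * a * v / n := by ring
  have hden (x : ℝ) : a / n + 2 * v * (1 - cos x) = a / n + 2 * v - 2 * v * cos x := by ring
  simp_rw [hden, CosineKernel.integral_one_div_sub_mul_cos_sq hAB, hdisc]
  have hs : 0 < √((a / n) ^ 2 + 4 * a * v / n) := by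
    rw [← hdisc]; exact sqrt_pos.2 (CosineKernel.sq_sub_sq_pos hAB)
  have hb4v : 0 < a / n + 4 * v := by linarith
  field_simp
  ring
end

section
/- Let F_n = ∇_n ∇_nᵀ where ∇_n is the n×n lower bidiagonal backward difference matrix (1 on the diagonal, −1 on the subdiagonal). Let U_n be the n×n matrix with entries u_{ij} = (2/√(2n+1))·cos((2π/(2n+1))(i−1/2)(j−1/2)). Then U_n is symmetric orthogonal, and U_n F_n U_n = diag(λ_1,…,λ_n) with λ_i = 2(1 − cos(2ξ_i)), where ξ_i = (π/(2n+1))(i−1/2). -/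
open Real Matrix Finset

private lemma two_sin_mul_cos (a b : ℝ) :
    2 * Real.sin a * Real.cos b = Real.sin (a + b) + Real.sin (a - b) := by
  rw [Real.sin_add, Real.sin_sub]; ring

private lemma two_cos_mul_cos (a b : ℝ) :
    2 * Real.cos a * Real.cos b = Real.cos (a + b) + Real.cos (a - b) := by
  rw [Real.cos_add, Real.cos_sub]; ring

private lemma eigen_id0 (c' x : ℝ) :
    c' * Real.cos x - c' * Real.cos (3*x) = c' * Real.cos x * (2 - 2*Real.cos (2*x)) := by
  have h := two_cos_mul_cos (2*x) x
  have e : 2*x + x = 3*x := by ring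
  have e2 : 2*x - x = x := by ring
  rw [e, e2] at h
  linear_combination c' * h

private lemma eigen_idm (c' x t : ℝ) :
    (c' * Real.cos (t + x) - c' * Real.cos (t + 3*x))
      - (c' * Real.cos (t - x) - c' * Real.cos (t + x))
      = c' * Real.cos (t + x) * (2 - 2*Real.cos (2*x)) := by
  have h := two_cos_mul_cos (2*x) (t + x)
  have e : 2*x + (t + x) = t + 3*x := by ring
  have e2 : 2*x - (t + x) = -(t - x) := by ring
  rw [e, e2, Real.cos_neg] at h
  linear_combination c' * h

private lemma sum_cos_odd (x : ℝ) (n : ℕ) :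
    2 * Real.sin x * ∑ k ∈ Finset.range n, Real.cos ((2 * (k : ℝ) + 1) * x)
      = Real.sin (2 * (n : ℝ) * x) := by
  induction n with
  | zero => simp
  | succ n ih =>
    rw [Finset.sum_range_succ, mul_add, ih]
    have h : 2 * Real.sin x * Real.cos ((2 * (n : ℝ) + 1) * x)
        = Real.sin (2 * ((n : ℝ) + 1) * x) - Real.sin (2 * (n : ℝ) * x) := by
      have h2 := two_sin_mul_cos x ((2 * (n : ℝ) + 1) * x)
      have e1 : x + (2 * (n : ℝ) + 1) * x = 2 * ((n : ℝ) + 1) * x := by ring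
      have e2 : x - (2 * (n : ℝ) + 1) * x = -(2 * (n : ℝ) * x) := by ring
      rw [e1, e2, Real.sin_neg] at h2
      linarith
    push_cast
    rw [h]
    ring

private lemma sum_cos_key (n : ℕ) (m : ℤ) (hm : ¬ ((2 * (n : ℤ) + 1) ∣ m)) :
    ∑ k ∈ Finset.range n, Real.cos ((2 * (k : ℝ) + 1) * ((m : ℝ) * π / (2 * (n : ℝ) + 1)))
      = -((-1 : ℝ) ^ m) / 2 := by
  have hNpos : (0 : ℝ) < 2 * (n : ℝ) + 1 := by positivity
  set x : ℝ := (m : ℝ) * π / (2 * (n : ℝ) + 1) with hx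
  have hsin : Real.sin x ≠ 0 := by
    intro hs
    rw [Real.sin_eq_zero_iff] at hs
    obtain ⟨k, hk⟩ := hs
    apply hm
    refine ⟨k, ?_⟩
    have h1 : (m : ℝ) = (2 * (n : ℝ) + 1) * (k : ℝ) := by
      rw [hx] at hk
      field_simp at hk
      nlinarith [Real.pi_pos, hk]
    exact_mod_cast h1
  have h2n : 2 * (n : ℝ) * x = (m : ℝ) * π - x := by
    rw [hx]; field_simp; ring
  have h3 := sum_cos_odd x n
  rw [h2n, Real.sin_int_mul_pi_sub] at h3
  have h4 : (2 * Real.sin x) ≠ 0 := mul_ne_zero two_ne_zero hsin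
  have h5 : 2 * Real.sin x * (∑ k ∈ Finset.range n,
      Real.cos ((2 * (k : ℝ) + 1) * x)) = 2 * Real.sin x * (-((-1 : ℝ) ^ m) / 2) := by
    rw [h3]; ring
  exact mul_left_cancel₀ h4 h5

private lemma ortho (n : ℕ) (i j : ℕ) (hi : i < n) (hj : j < n) :
    ∑ k ∈ Finset.range n,
        Real.cos (2 * π / (2 * (n : ℝ) + 1) * ((i : ℝ) + 1 / 2) * ((k : ℝ) + 1 / 2)) *
          Real.cos (2 * π / (2 * (n : ℝ) + 1) * ((j : ℝ) + 1 / 2) * ((k : ℝ) + 1 / 2))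
      = if i = j then (2 * (n : ℝ) + 1) / 4 else 0 := by
  have hNpos : (0 : ℝ) < 2 * (n : ℝ) + 1 := by positivity
  have hterm : ∀ k : ℕ,
      Real.cos (2 * π / (2 * (n : ℝ) + 1) * ((i : ℝ) + 1 / 2) * ((k : ℝ) + 1 / 2)) *
        Real.cos (2 * π / (2 * (n : ℝ) + 1) * ((j : ℝ) + 1 / 2) * ((k : ℝ) + 1 / 2))
      = (Real.cos ((2 * (k : ℝ) + 1) * ((((i : ℤ) + (j : ℤ) + 1 : ℤ) : ℝ) * π / (2 * (n : ℝ) + 1)))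
        + Real.cos ((2 * (k : ℝ) + 1) * ((((i : ℤ) - (j : ℤ) : ℤ) : ℝ) * π / (2 * (n : ℝ) + 1)))) / 2 := by
    intro k
    have h := two_cos_mul_cos (2 * π / (2 * (n : ℝ) + 1) * ((i : ℝ) + 1 / 2) * ((k : ℝ) + 1 / 2))
      (2 * π / (2 * (n : ℝ) + 1) * ((j : ℝ) + 1 / 2) * ((k : ℝ) + 1 / 2))
    have e1 : 2 * π / (2 * (n : ℝ) + 1) * ((i : ℝ) + 1 / 2) * ((k : ℝ) + 1 / 2)
        + 2 * π / (2 * (n : ℝ) + 1) * ((j : ℝ) + 1 / 2) * ((k : ℝ) + 1 / 2)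
        = (2 * (k : ℝ) + 1) * ((((i : ℤ) + (j : ℤ) + 1 : ℤ) : ℝ) * π / (2 * (n : ℝ) + 1)) := by
      push_cast; ring
    have e2 : 2 * π / (2 * (n : ℝ) + 1) * ((i : ℝ) + 1 / 2) * ((k : ℝ) + 1 / 2)
        - 2 * π / (2 * (n : ℝ) + 1) * ((j : ℝ) + 1 / 2) * ((k : ℝ) + 1 / 2)
        = (2 * (k : ℝ) + 1) * ((((i : ℤ) - (j : ℤ) : ℤ) : ℝ) * π / (2 * (n : ℝ) + 1)) := by
      push_cast; ring
    rw [e1, e2] at h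
    linarith
  rw [Finset.sum_congr rfl fun k _ => hterm k]
  rw [← Finset.sum_div, Finset.sum_add_distrib]
  have hdvd1 : ¬ ((2 * (n : ℤ) + 1) ∣ ((i : ℤ) + (j : ℤ) + 1)) := by
    intro hd
    have h1 : (0 : ℤ) < (i : ℤ) + (j : ℤ) + 1 := by positivity
    have := Int.le_of_dvd h1 hd
    omega
  have hS1 := sum_cos_key n ((i : ℤ) + (j : ℤ) + 1) hdvd1
  rw [hS1]
  by_cases hij : i = j
  · subst hij
    have hS2 : ∑ k ∈ Finset.range n,
        Real.cos ((2 * (k : ℝ) + 1) * ((((i : ℤ) - (i : ℤ) : ℤ) : ℝ) * π / (2 * (n : ℝ) + 1)))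
        = (n : ℝ) := by
      rw [Finset.sum_congr rfl fun k _ => ?_]
      · rw [Finset.sum_const, Finset.card_range, nsmul_eq_mul, mul_one]
      · norm_num
    rw [hS2, if_pos rfl]
    have hodd : ((-1 : ℝ) ^ ((i : ℤ) + (i : ℤ) + 1)) = -1 := by
      have : Odd ((i : ℤ) + (i : ℤ) + 1) := ⟨(i : ℤ), by ring⟩
      exact this.neg_one_zpow
    rw [hodd]
    ring
  · have hdvd2 : ¬ ((2 * (n : ℤ) + 1) ∣ ((i : ℤ) - (j : ℤ))) := by
      intro hd
      have h1 : (2 * (n : ℤ) + 1) ∣ |(i : ℤ) - (j : ℤ)| := (dvd_abs _ _).mpr hd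
      have h2 : (0 : ℤ) < |(i : ℤ) - (j : ℤ)| := abs_pos.mpr (by
        intro h; apply hij; omega)
      have := Int.le_of_dvd h2 h1
      rcases abs_cases ((i : ℤ) - (j : ℤ)) with ⟨h3, _⟩ | ⟨h3, _⟩ <;> omega
    have hS2 := sum_cos_key n ((i : ℤ) - (j : ℤ)) hdvd2
    rw [hS2, if_neg hij]
    have hsign : ((-1 : ℝ) ^ ((i : ℤ) + (j : ℤ) + 1)) = -((-1 : ℝ) ^ ((i : ℤ) - (j : ℤ))) := by
      have e : (i : ℤ) + (j : ℤ) + 1 = ((i : ℤ) - (j : ℤ)) + (2 * (j : ℤ) + 1) := by ring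
      rw [e, zpow_add₀ (by norm_num : (-1 : ℝ) ≠ 0)]
      have h1 : ((-1 : ℝ) ^ (2 * (j : ℤ) + 1)) = -1 := Odd.neg_one_zpow ⟨(j : ℤ), by ring⟩
      rw [h1]; ring
    rw [hsign]
    ring

private lemma sum_ite_val {n : ℕ} (m : ℕ) (f : Fin n → ℝ) :
    ∑ j : Fin n, (if (j : ℕ) = m then f j else 0) = if h : m < n then f ⟨m, h⟩ else 0 := by
  by_cases h : m < n
  · rw [dif_pos h, Finset.sum_eq_single (⟨m, h⟩ : Fin n)]
    · rw [if_pos rfl]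
    · intro b _ hb
      exact if_neg (fun hbm => hb (Fin.ext hbm))
    · intro hmem; exact absurd (Finset.mem_univ _) hmem
  · rw [dif_neg h]
    apply Finset.sum_eq_zero
    intro j _
    apply if_neg
    intro hj
    exact h (hj ▸ j.2)

private lemma nabla_col {n : ℕ} (l : Fin n) (F : ℕ → ℝ) (hFn : F n = 0) :
    ∑ j : Fin n, (if j = l then (1:ℝ) else if (l:ℕ)+1 = (j:ℕ) then -1 else 0) * F (j:ℕ)
      = F (l:ℕ) - F ((l:ℕ)+1) := by
  have hsplit : ∀ j : Fin n,
      (if j = l then (1:ℝ) else if (l:ℕ)+1 = (j:ℕ) then -1 else 0) * F (j:ℕ)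
      = (if (j:ℕ) = (l:ℕ) then (fun j : Fin n => F (j:ℕ)) j else 0)
        + (if (j:ℕ) = (l:ℕ)+1 then (fun j : Fin n => -F (j:ℕ)) j else 0) := by
    intro j
    by_cases h1 : j = l
    · subst h1; simp
    · by_cases h2 : (l:ℕ)+1 = (j:ℕ)
      · rw [if_neg h1, if_pos h2, if_neg (fun h => h1 (Fin.ext h)), if_pos h2.symm]; ring
      · rw [if_neg h1, if_neg h2, if_neg (fun h => h1 (Fin.ext h)), if_neg (fun h => h2 h.symm)]
        ring
  rw [Finset.sum_congr rfl fun j _ => hsplit j, Finset.sum_add_distrib,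
    sum_ite_val (l:ℕ) (fun j : Fin n => F (j:ℕ)), sum_ite_val ((l:ℕ)+1) (fun j : Fin n => -F (j:ℕ)),
    dif_pos l.2]
  by_cases h : (l:ℕ)+1 < n
  · rw [dif_pos h]; ring
  · rw [dif_neg h]
    have : (l:ℕ)+1 = n := by omega
    rw [this, hFn]; ring

private lemma nabla_row_zero {n : ℕ} (i : Fin n) (hi : (i:ℕ) = 0) (g : Fin n → ℝ) :
    ∑ l : Fin n, (if i = l then (1:ℝ) else if (l:ℕ)+1 = (i:ℕ) then -1 else 0) * g l = g i := by
  have hsplit : ∀ l : Fin n,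
      (if i = l then (1:ℝ) else if (l:ℕ)+1 = (i:ℕ) then -1 else 0) * g l
      = (if (l:ℕ) = (i:ℕ) then g l else 0) := by
    intro l
    by_cases h1 : i = l
    · subst h1; simp
    · rw [if_neg h1, if_neg (by omega), zero_mul, if_neg (fun h => h1 (Fin.ext h).symm)]
  rw [Finset.sum_congr rfl fun l _ => hsplit l, sum_ite_val (i:ℕ) g, dif_pos i.2]

private lemma nabla_row_succ {n : ℕ} (i : Fin n) (m : ℕ) (hm : m + 1 = (i:ℕ)) (g : Fin n → ℝ) :
    ∑ l : Fin n, (if i = l then (1:ℝ) else if (l:ℕ)+1 = (i:ℕ) then -1 else 0) * g l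
      = g i - g ⟨m, by omega⟩ := by
  have hsplit : ∀ l : Fin n,
      (if i = l then (1:ℝ) else if (l:ℕ)+1 = (i:ℕ) then -1 else 0) * g l
      = (if (l:ℕ) = (i:ℕ) then g l else 0) + (if (l:ℕ) = m then -g l else 0) := by
    intro l
    by_cases h1 : i = l
    · subst h1
      rw [if_pos rfl, if_pos rfl, if_neg (by omega), one_mul]; ring
    · by_cases h2 : (l:ℕ)+1 = (i:ℕ)
      · rw [if_neg h1, if_pos h2, if_neg (fun h => h1 (Fin.ext h).symm), if_pos (by omega)]; ring
      · rw [if_neg h1, if_neg h2, if_neg (fun h => h1 (Fin.ext h).symm), if_neg (by omega)]; ring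
  rw [Finset.sum_congr rfl fun l _ => hsplit l, Finset.sum_add_distrib,
    sum_ite_val (i:ℕ) g, sum_ite_val m (fun l : Fin n => -g l), dif_pos i.2,
    dif_pos (by omega : m < n)]
  have h3 : (⟨(i:ℕ), i.2⟩ : Fin n) = i := Fin.ext rfl
  rw [h3]; ring

private noncomputable def Vfun (n m k : ℕ) : ℝ :=
  2 / Real.sqrt (2 * (n:ℝ) + 1) *
    Real.cos (2 * π / (2 * (n:ℝ) + 1) * ((m:ℝ) + 1/2) * ((k:ℝ) + 1/2))

private lemma Vfun_top (n k : ℕ) : Vfun n n k = 0 := by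
  have hNpos : (0 : ℝ) < 2 * (n : ℝ) + 1 := by positivity
  have e : 2 * π / (2 * (n:ℝ) + 1) * ((n:ℝ) + 1/2) * ((k:ℝ) + 1/2)
      = π/2 + (k:ℕ) * π := by
    field_simp
    ring
  rw [Vfun, e]
  rw [Real.cos_add_nat_mul_pi, Real.cos_pi_div_two]
  ring

theorem stmt_13 (n : ℕ) (hn : 1 ≤ n)
    (nabla : Matrix (Fin n) (Fin n) ℝ)
    (hnabla : nabla = Matrix.of fun i j : Fin n =>
      if i = j then 1 else if (j : ℕ) + 1 = (i : ℕ) then -1 else 0)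
    (U : Matrix (Fin n) (Fin n) ℝ)
    (hU : U = Matrix.of fun i j : Fin n =>
      2 / Real.sqrt (2 * n + 1) *
        Real.cos (2 * Real.pi / (2 * n + 1) * ((i : ℝ) + 1 - 1 / 2) * ((j : ℝ) + 1 - 1 / 2))) :
    Uᵀ = U ∧ U * Uᵀ = 1 ∧
      U * (nabla * nablaᵀ) * U =
        Matrix.diagonal (fun i : Fin n =>
          2 * (1 - Real.cos (2 * (Real.pi / (2 * n + 1) * (((i : ℕ) + 1 : ℝ) - 1 / 2))))) := by
  have hNpos : (0 : ℝ) < 2 * (n : ℝ) + 1 := by positivity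
  have hUapp : ∀ i j : Fin n, U i j
      = 2 / Real.sqrt (2 * (n:ℝ) + 1) *
        Real.cos (2 * π / (2 * (n:ℝ) + 1) * (((i:ℕ):ℝ) + 1/2) * (((j:ℕ):ℝ) + 1/2)) := by
    intro i j
    rw [hU]
    simp only [Matrix.of_apply]
    congr 1
    congr 1
    ring
  have hT : Uᵀ = U := by
    ext i j
    rw [Matrix.transpose_apply, hUapp, hUapp]
    congr 1
    congr 1
    ring
  have hUU : U * Uᵀ = 1 := by
    rw [hT]
    ext i j
    rw [Matrix.mul_apply, Matrix.one_apply]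
    have hsymm : ∀ a b : Fin n, U a b = U b a := by
      intro a b
      rw [hUapp, hUapp]
      congr 1
      congr 1
      ring
    rw [Finset.sum_congr rfl fun k (_ : k ∈ Finset.univ) => by rw [hsymm k j]]
    have hsum : ∑ k : Fin n, U i k * U j k
        = (2 / Real.sqrt (2 * (n:ℝ) + 1))^2 *
          (if (i:ℕ) = (j:ℕ) then (2 * (n:ℝ) + 1)/4 else 0) := by
      rw [← ortho n i j i.2 j.2, Finset.mul_sum, ← Fin.sum_univ_eq_sum_range
        (fun m : ℕ => (2 / Real.sqrt (2 * (n:ℝ) + 1))^2 *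
          (Real.cos (2 * π / (2 * (n:ℝ) + 1) * (((i:ℕ):ℝ) + 1/2) * ((m:ℝ) + 1/2)) *
           Real.cos (2 * π / (2 * (n:ℝ) + 1) * (((j:ℕ):ℝ) + 1/2) * ((m:ℝ) + 1/2)))) n]
      refine Finset.sum_congr rfl fun k _ => ?_
      rw [hUapp, hUapp]
      ring
    rw [hsum]
    have hc2 : (2 / Real.sqrt (2 * (n:ℝ) + 1))^2 = 4 / (2 * (n:ℝ) + 1) := by
      rw [div_pow, Real.sq_sqrt hNpos.le]
      norm_num
    by_cases hij : i = j
    · rw [if_pos (by rw [hij]), if_pos hij, hc2]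
      field_simp
    · rw [if_neg (fun h => hij (Fin.ext h)), if_neg hij]
      ring
  have hUU' : U * U = 1 := by nth_rewrite 2 [← hT]; exact hUU
  refine ⟨hT, hUU, ?_⟩
  subst hnabla
  set lam : Fin n → ℝ := fun i : Fin n =>
    2 * (1 - Real.cos (2 * (Real.pi / (2 * n + 1) * (((i : ℕ) + 1 : ℝ) - 1 / 2)))) with hlam
  have hW : (Matrix.of fun i j : Fin n =>
        if i = j then (1:ℝ) else if (j : ℕ) + 1 = (i : ℕ) then -1 else 0)ᵀ * U
      = Matrix.of (fun l k : Fin n => Vfun n (l:ℕ) (k:ℕ) - Vfun n ((l:ℕ)+1) (k:ℕ)) := by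
    ext l k
    rw [Matrix.mul_apply]
    simp only [Matrix.transpose_apply, Matrix.of_apply]
    have hconv : ∀ j : Fin n,
        (if j = l then (1:ℝ) else if (l:ℕ)+1 = (j:ℕ) then -1 else 0) * U j k
        = (if j = l then (1:ℝ) else if (l:ℕ)+1 = (j:ℕ) then -1 else 0) *
            (fun m : ℕ => Vfun n m (k:ℕ)) (j:ℕ) := by
      intro j
      rw [hUapp]
      rfl
    rw [Finset.sum_congr rfl fun j _ => hconv j]
    exact nabla_col l (fun m : ℕ => Vfun n m (k:ℕ)) (Vfun_top n (k:ℕ))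
  have hlamk : ∀ k : Fin n, lam k
      = 2 - 2 * Real.cos (2 * (π / (2 * (n:ℝ) + 1) * (((k:ℕ):ℝ) + 1/2))) := by
    intro k
    simp only [hlam]
    have e : 2 * (Real.pi / (2 * (n:ℝ) + 1) * ((((k:ℕ):ℝ) + 1 : ℝ) - 1 / 2))
        = 2 * (π / (2 * (n:ℝ) + 1) * (((k:ℕ):ℝ) + 1/2)) := by ring
    rw [e]
    ring
  have hFU : (Matrix.of fun i j : Fin n =>
        if i = j then (1:ℝ) else if (j : ℕ) + 1 = (i : ℕ) then -1 else 0) *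
      ((Matrix.of fun i j : Fin n =>
        if i = j then (1:ℝ) else if (j : ℕ) + 1 = (i : ℕ) then -1 else 0)ᵀ * U)
      = U * Matrix.diagonal lam := by
    rw [hW]
    ext i k
    rw [Matrix.mul_apply, Matrix.mul_diagonal]
    simp only [Matrix.of_apply]
    set x : ℝ := π / (2 * (n:ℝ) + 1) * (((k:ℕ):ℝ) + 1/2) with hx
    have hVm : ∀ m : ℕ, Vfun n m (k:ℕ)
        = 2 / Real.sqrt (2 * (n:ℝ) + 1) * Real.cos ((2*(m:ℝ)+1) * x) := by
      intro m
      rw [Vfun, hx]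
      congr 1
      congr 1
      ring
    have hUik : U i k = 2 / Real.sqrt (2 * (n:ℝ) + 1) * Real.cos ((2*((i:ℕ):ℝ)+1) * x) := by
      rw [hUapp, hx]
      congr 1
      congr 1
      ring
    have hlx : lam k = 2 - 2 * Real.cos (2*x) := by
      rw [hlamk k, hx]
    rcases Nat.eq_zero_or_pos (i:ℕ) with hi0 | hipos
    · rw [nabla_row_zero i hi0 (fun l : Fin n => Vfun n (l:ℕ) (k:ℕ) - Vfun n ((l:ℕ)+1) (k:ℕ))]
      rw [hi0]  -- may fail: (i:ℕ) occurs in goal via g i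
      rw [hVm, hVm, hUik, hlx, hi0]
      have e1 : (2*((0:ℕ):ℝ)+1) * x = x := by norm_num
      have e2 : (2*(((0:ℕ)+1:ℕ):ℝ)+1) * x = 3*x := by push_cast; ring
      rw [e1, e2]
      exact eigen_id0 _ x
    · obtain ⟨m, hm⟩ : ∃ m : ℕ, m + 1 = (i:ℕ) := ⟨(i:ℕ)-1, by omega⟩
      rw [nabla_row_succ i m hm (fun l : Fin n => Vfun n (l:ℕ) (k:ℕ) - Vfun n ((l:ℕ)+1) (k:ℕ))]
      simp only
      rw [hVm ((i:ℕ)), hVm ((i:ℕ)+1), hVm ((⟨m, by omega⟩ : Fin n) : ℕ), hVm (((⟨m, by omega⟩ : Fin n) : ℕ)+1), hUik, hlx]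
      have hmv : ((⟨m, by omega⟩ : Fin n) : ℕ) = m := rfl
      rw [hmv]
      set t : ℝ := (2*(m:ℝ)+2) * x with ht
      have e1 : (2*((i:ℕ):ℝ)+1) * x = t + x := by
        rw [ht]
        have : ((i:ℕ):ℝ) = (m:ℝ) + 1 := by exact_mod_cast congrArg (Nat.cast : ℕ → ℝ) hm.symm
        rw [this]; ring
      have e2 : (2*(((i:ℕ)+1:ℕ):ℝ)+1) * x = t + 3*x := by
        rw [ht]
        have : ((i:ℕ):ℝ) = (m:ℝ) + 1 := by exact_mod_cast congrArg (Nat.cast : ℕ → ℝ) hm.symm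
        push_cast
        rw [this]; ring
      have e3 : (2*(m:ℝ)+1) * x = t - x := by rw [ht]; ring
      have e4 : (2*((m+1:ℕ):ℝ)+1) * x = t + x := by rw [ht]; push_cast; ring
      rw [e1, e2, e3, e4]
      exact eigen_idm _ x t
  calc U * ((Matrix.of fun i j : Fin n =>
        if i = j then (1:ℝ) else if (j : ℕ) + 1 = (i : ℕ) then -1 else 0) *
      (Matrix.of fun i j : Fin n =>
        if i = j then (1:ℝ) else if (j : ℕ) + 1 = (i : ℕ) then -1 else 0)ᵀ) * U
      = U * (U * Matrix.diagonal lam) := by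
        rw [Matrix.mul_assoc, Matrix.mul_assoc, hFU]
    _ = Matrix.diagonal lam := by
        rw [← Matrix.mul_assoc, hUU', Matrix.one_mul]
end

section
/- For the positive definite n×n matrix G_n(a) = (a/n)E_n + v F_n (with F_n = ∇_n∇_nᵀ, a > 0, v ≥ 0) and R_n the matrix with 1 in the (1,1) entry and 0 elsewhere, the spectral norm satisfies ‖G_n(a)^{−1/2} R_n G_n(b)^{−1/2}‖_sp ≤ (4/(2n+1))·Σ_{k=1}^n (1/f_a(2ξ_k) + 1/f_b(2ξ_k)), where f_c(x) = c/n + 2v(1−cos x) and ξ_k = (π/(2n+1))(k−1/2), for any a, b > 0. -/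
/-!
`Sa * R * Sb` is the rank-one map `x ↦ ⟪Sb e₁, x⟫ • Sa e₁`, so its norm is
`‖Sa e₁‖ ‖Sb e₁‖ ≤ ‖Sa e₁‖² + ‖Sb e₁‖² = G(a)⁻¹₁₁ + G(b)⁻¹₁₁`.
The rows `j ↦ cos ((2j+1) ξ_k)` of the unnormalised DCT-VIII matrix `Q` are orthogonal with
squared norm `(2n+1)/4` and are left eigenvectors of `∇∇ᵀ` with eigenvalues `2 (1 - cos 2ξ_k)`.
Hence `G(c)⁻¹ = 4/(2n+1) • Qᵀ diag (1 / f_c(2ξ_k)) Q`, and since `|Q k j| ≤ 1` every diagonal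
entry of `G(c)⁻¹` is at most `4/(2n+1) ∑ₖ 1 / f_c(2ξ_k)`.
-/

open Real Matrix

theorem two_mul_sin_mul_sum_range_cos_odd_mul (θ : ℝ) (n : ℕ) :
    2 * sin θ * ∑ j ∈ Finset.range n, cos ((2 * j + 1) * θ) = sin (2 * n * θ) := by
  induction n with
  | zero => simp
  | succ n ih =>
    rw [Finset.sum_range_succ, mul_add, ih]
    have h₁ : 2 * ((n + 1 : ℕ) : ℝ) * θ = (2 * n + 1) * θ + θ := by push_cast; ring
    have h₂ : 2 * (n : ℝ) * θ = (2 * n + 1) * θ - θ := by ring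
    rw [h₁, h₂, sin_add, sin_sub]
    ring

theorem sum_range_cos_odd_mul_int_mul_pi_div (n : ℕ) (m : ℤ) (hm : ¬(2 * n + 1 : ℤ) ∣ m) :
    ∑ j ∈ Finset.range n, cos ((2 * j + 1) * (m * π / (2 * n + 1))) = -(-1) ^ m / 2 := by
  obtain ⟨θ, hθ⟩ : ∃ θ, θ = m * π / (2 * n + 1) := ⟨_, rfl⟩
  have hNθ : (2 * n + 1) * θ = m * π := by rw [hθ]; field_simp
  rw [← hθ]
  have hsin : sin θ ≠ 0 := by
    rw [Ne, sin_eq_zero_iff]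
    rintro ⟨k, rfl⟩
    refine hm ⟨k, ?_⟩
    exact_mod_cast (mul_right_cancel₀ pi_ne_zero (by linarith) : (m : ℝ) = (2 * n + 1) * k)
  have key := two_mul_sin_mul_sum_range_cos_odd_mul θ n
  rw [show 2 * (n : ℝ) * θ = m * π - θ by linarith, sin_int_mul_pi_sub] at key
  apply mul_left_cancel₀ (mul_ne_zero two_ne_zero hsin)
  linear_combination key

theorem Int.not_dvd_of_abs_lt {m x : ℤ} (hx : x ≠ 0) (h : |x| < m) : ¬m ∣ x :=
  fun hdvd => hx (Int.eq_zero_of_abs_lt_dvd hdvd h)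

-- `dctAngle n k` is the paper's `ξ_{k+1}`, and `dctMatrix n = (√(2n+1) / 2) • U_n`.
noncomputable def dctAngle (n k : ℕ) : ℝ := π / (2 * n + 1) * ((k + 1 : ℝ) - 1 / 2)

noncomputable def dctMatrix (n : ℕ) : Matrix (Fin n) (Fin n) ℝ :=
  of fun k j => cos ((2 * j + 1) * dctAngle n k)

theorem sum_range_cos_mul_cos_dctAngle (n k l : ℕ) :
    ∑ j ∈ Finset.range n, cos ((2 * j + 1) * dctAngle n k) * cos ((2 * j + 1) * dctAngle n l) =
      (∑ j ∈ Finset.range n, cos ((2 * j + 1) * (((k - l : ℤ) : ℝ) * π / (2 * n + 1))) +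
        ∑ j ∈ Finset.range n, cos ((2 * j + 1) * (((k + l + 1 : ℤ) : ℝ) * π / (2 * n + 1)))) /
        2 := by
  rw [← Finset.sum_add_distrib, Finset.sum_div]
  refine Finset.sum_congr rfl fun j _ => ?_
  rw [eq_div_iff two_ne_zero, mul_comm, ← mul_assoc, two_mul_cos_mul_cos]
  congr 2 <;> (simp only [dctAngle]; push_cast; field_simp; ring)

theorem dctMatrix_mul_transpose (n : ℕ) :
    dctMatrix n * (dctMatrix n)ᵀ = ((2 * n + 1) / 4 : ℝ) • (1 : Matrix (Fin n) (Fin n) ℝ) := by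
  ext k l
  simp only [mul_apply, transpose_apply, dctMatrix, of_apply, Matrix.smul_apply, one_apply,
    smul_eq_mul]
  rw [Fin.sum_univ_eq_sum_range (fun j => cos ((2 * j + 1) * dctAngle n k) *
    cos ((2 * j + 1) * dctAngle n l)), sum_range_cos_mul_cos_dctAngle]
  have hk := k.isLt
  have hl := l.isLt
  rw [sum_range_cos_odd_mul_int_mul_pi_div n (k + l + 1)
    (Int.not_dvd_of_abs_lt (by omega) (by rw [abs_lt]; omega))]
  split_ifs with hkl
  · subst hkl
    simp only [sub_self, Int.cast_zero, zero_mul, zero_div, mul_zero, cos_zero,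
      Finset.sum_const, Finset.card_range, nsmul_eq_mul, mul_one]
    rw [Odd.neg_one_zpow ⟨k, by ring⟩]
    ring
  · have hkl' : (k : ℤ) - l ≠ 0 := by omega
    rw [sum_range_cos_odd_mul_int_mul_pi_div n (k - l)
      (Int.not_dvd_of_abs_lt hkl' (by rw [abs_lt]; omega)),
      show (k + l + 1 : ℤ) = (k - l) + (2 * l + 1) by ring,
      zpow_add₀ (by norm_num), Odd.neg_one_zpow ⟨l, rfl⟩]
    ring

section BackwardDiff

variable (R : Type*) [Ring R] (n : ℕ)

def backwardDiff : Matrix (Fin n) (Fin n) R :=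
  of fun i j => if i = j then 1 else if (j : ℕ) + 1 = (i : ℕ) then -1 else 0

variable {R n}

/- Vectors are restrictions to `[0, n)` of functions on `ℤ`; the boundary conditions
`f n = 0` and `g (-1) = 0` stand in for the missing neighbours of the end points. -/

theorem sum_fin_mul_ite_cast_eq (f : ℤ → R) (m : ℤ) (hf : ¬(0 ≤ m ∧ m < n) → f m = 0) :
    ∑ j : Fin n, f j * (if (j : ℤ) = m then 1 else 0) = f m := by
  by_cases hm : 0 ≤ m ∧ m < n
  · lift m to ℕ using hm.1
    rw [Finset.sum_eq_single ⟨m, by omega⟩ (fun j _ hj => by simp [Fin.ext_iff] at hj ⊢; omega)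
      (by simp)]
    simp
  · rw [hf hm]
    refine Finset.sum_eq_zero fun j _ => ?_
    split_ifs with hj
    · rw [hj, hf hm, zero_mul]
    · rw [mul_zero]

theorem vecMul_backwardDiff (f : ℤ → R) (hf : f n = 0) :
    (fun j : Fin n => f j) ᵥ* backwardDiff R n = fun i : Fin n => f i - f ((i : ℤ) + 1) := by
  ext i
  have hentry : ∀ j : Fin n, backwardDiff R n j i =
      (if (j : ℤ) = i then 1 else 0) - (if (j : ℤ) = i + 1 then 1 else 0) := by
    intro j
    simp only [backwardDiff, of_apply, Fin.ext_iff]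
    split_ifs <;> first | (exfalso; omega) | simp
  simp only [vecMul, dotProduct, hentry, mul_sub, Finset.sum_sub_distrib]
  rw [sum_fin_mul_ite_cast_eq f i (by omega), sum_fin_mul_ite_cast_eq f (i + 1)
    fun h => by rw [show (i : ℤ) + 1 = n by omega, hf]]

theorem vecMul_transpose_backwardDiff (g : ℤ → R) (hg : g (-1) = 0) :
    (fun j : Fin n => g j) ᵥ* (backwardDiff R n)ᵀ = fun i : Fin n => g i - g ((i : ℤ) - 1) := by
  ext i
  have hentry : ∀ j : Fin n, (backwardDiff R n)ᵀ j i =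
      (if (j : ℤ) = i then 1 else 0) - (if (j : ℤ) = i - 1 then 1 else 0) := by
    intro j
    simp only [transpose_apply, backwardDiff, of_apply, Fin.ext_iff]
    split_ifs <;> first | (exfalso; omega) | simp
  simp only [vecMul, dotProduct, hentry, mul_sub, Finset.sum_sub_distrib]
  rw [sum_fin_mul_ite_cast_eq g i (by omega), sum_fin_mul_ite_cast_eq g (i - 1)
    fun h => by rw [show (i : ℤ) - 1 = -1 by omega, hg]]

theorem vecMul_backwardDiff_mul_transpose (f : ℤ → R) (h₀ : f (-1) = f 0) (hn : f n = 0) :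
    (fun j : Fin n => f j) ᵥ* (backwardDiff R n * (backwardDiff R n)ᵀ) =
      fun i : Fin n => 2 * f i - f ((i : ℤ) - 1) - f ((i : ℤ) + 1) := by
  rw [← vecMul_vecMul, vecMul_backwardDiff f hn,
    vecMul_transpose_backwardDiff (fun t => f t - f (t + 1)) (by simp [h₀])]
  ext i
  simp only [sub_add_cancel]
  rw [two_mul]
  abel

end BackwardDiff

theorem two_mul_cos_sub_cos_sub_cos (x y : ℝ) :
    2 * cos x - cos (x - y) - cos (x + y) = 2 * (1 - cos y) * cos x := by
  rw [cos_sub, cos_add]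
  ring

theorem cos_two_mul_add_one_mul_dctAngle (n k : ℕ) : cos ((2 * n + 1) * dctAngle n k) = 0 :=
  cos_eq_zero_iff.mpr ⟨k, by simp only [dctAngle]; push_cast; field_simp; ring⟩

theorem dctMatrix_mul_backwardDiff_mul_transpose (n : ℕ) :
    dctMatrix n * (backwardDiff ℝ n * (backwardDiff ℝ n)ᵀ) =
      diagonal (fun k : Fin n => 2 * (1 - cos (2 * dctAngle n k))) * dctMatrix n := by
  ext k i
  have hrow : dctMatrix n k = fun j : Fin n => cos ((2 * ((j : ℤ) : ℝ) + 1) * dctAngle n k) := by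
    ext j; rw [dctMatrix, of_apply, Int.cast_natCast]
  rw [diagonal_mul, mul_apply_eq_vecMul, hrow,
    vecMul_backwardDiff_mul_transpose (fun t : ℤ => cos ((2 * (t : ℝ) + 1) * dctAngle n k))
      (by norm_num) (by simpa using cos_two_mul_add_one_mul_dctAngle n k)]
  simp only [Int.cast_add, Int.cast_sub, Int.cast_one, Int.cast_natCast]
  rw [← two_mul_cos_sub_cos_sub_cos]
  ring_nf

theorem inv_eq_smul_transpose_mul_diagonal_mul {K ι : Type*} [Field K] [Fintype ι]
    [DecidableEq ι] {A Q : Matrix ι ι K} {s : K} {d : ι → K} (hs : s ≠ 0) (hd : ∀ i, d i ≠ 0)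
    (hQ : Q * Qᵀ = s • 1) (hA : Q * A = diagonal d * Q) :
    A⁻¹ = s⁻¹ • (Qᵀ * diagonal d⁻¹ * Q) := by
  have hleft : s⁻¹ • Qᵀ * Q = 1 :=
    mul_eq_one_comm.mp <| by rw [Matrix.mul_smul, hQ, smul_smul, inv_mul_cancel₀ hs, one_smul]
  have hdd : diagonal d⁻¹ * diagonal d = 1 := by
    rw [diagonal_mul_diagonal, ← diagonal_one]
    exact congrArg diagonal (funext fun i => inv_mul_cancel₀ (hd i))
  refine inv_eq_left_inv ?_
  calc s⁻¹ • (Qᵀ * diagonal d⁻¹ * Q) * A = s⁻¹ • (Qᵀ * (diagonal d⁻¹ * diagonal d) * Q) := by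
        simp only [smul_mul, Matrix.mul_assoc, hA]
    _ = 1 := by rw [hdd, Matrix.mul_one, ← smul_mul, hleft]

theorem transpose_mul_diagonal_mul_apply_self_le {m ι : Type*} [Fintype m] [DecidableEq m]
    {Q : Matrix m ι ℝ} {e : m → ℝ} (he : ∀ k, 0 ≤ e k) (z : ι) (hQ : ∀ k, |Q k z| ≤ 1) :
    (Qᵀ * diagonal e * Q) z z ≤ ∑ k, e k := by
  rw [Matrix.mul_assoc, mul_apply]
  simp only [transpose_apply, diagonal_mul]
  refine Finset.sum_le_sum fun k _ => ?_
  have hsq : Q k z * Q k z ≤ 1 := by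
    rw [← sq, sq_le_one_iff_abs_le_one]; exact hQ k
  nlinarith [he k]

-- The paper's `f_c`.
noncomputable def symbol (n : ℕ) (v c x : ℝ) : ℝ := c / n + 2 * v * (1 - cos x)

theorem symbol_pos {n : ℕ} {v c : ℝ} (hn : 0 < n) (hv : 0 ≤ v) (hc : 0 < c) (x : ℝ) :
    0 < symbol n v c x := by
  have : 0 ≤ 1 - cos x := sub_nonneg.mpr (cos_le_one x)
  unfold symbol
  positivity

theorem dctMatrix_mul_smul_one_add_smul (n : ℕ) (v c : ℝ) :
    dctMatrix n * ((c / n) • 1 + v • (backwardDiff ℝ n * (backwardDiff ℝ n)ᵀ)) =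
      diagonal (fun k : Fin n => symbol n v c (2 * dctAngle n k)) * dctMatrix n := by
  rw [Matrix.mul_add, Matrix.mul_smul, Matrix.mul_smul, dctMatrix_mul_backwardDiff_mul_transpose,
    Matrix.mul_one]
  ext k j
  simp only [Matrix.add_apply, Matrix.smul_apply, diagonal_mul, smul_eq_mul, symbol]
  ring

theorem inv_smul_one_add_smul_apply_self_le {n : ℕ} {v c : ℝ} (hv : 0 ≤ v) (hc : 0 < c)
    (z : Fin n) :
    ((c / n) • 1 + v • (backwardDiff ℝ n * (backwardDiff ℝ n)ᵀ))⁻¹ z z ≤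
      4 / (2 * n + 1) * ∑ k : Fin n, 1 / symbol n v c (2 * dctAngle n k) := by
  have hn : 0 < n := z.pos
  rw [inv_eq_smul_transpose_mul_diagonal_mul (by positivity)
    (fun k => (symbol_pos hn hv hc _).ne') (dctMatrix_mul_transpose n)
    (dctMatrix_mul_smul_one_add_smul n v c), Matrix.smul_apply, smul_eq_mul, inv_div]
  refine mul_le_mul_of_nonneg_left ?_ (by positivity)
  simpa only [Pi.inv_def, one_div] using transpose_mul_diagonal_mul_apply_self_le
    (fun k => (inv_pos.mpr (symbol_pos hn hv hc _)).le) z (fun k => abs_cos_le_one _)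

theorem norm_toEuclideanCLM_vecMulVec {𝕜 ι : Type*} [RCLike 𝕜] [Fintype ι] [DecidableEq ι]
    (x y : ι → 𝕜) :
    ‖toEuclideanCLM (𝕜 := 𝕜) (vecMulVec x y)‖ = ‖WithLp.toLp 2 x‖ * ‖WithLp.toLp 2 y‖ := by
  have hrankOne : toEuclideanCLM (𝕜 := 𝕜) (vecMulVec x y) =
      InnerProductSpace.rankOne 𝕜 (WithLp.toLp 2 x) (WithLp.toLp 2 (star y)) := by
    apply ContinuousLinearMap.coe_injective
    rw [coe_toEuclideanCLM_eq_toEuclideanLin, ← LinearEquiv.eq_symm_apply,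
      InnerProductSpace.symm_toEuclideanLin_rankOne]
    simp
  rw [hrankOne, InnerProductSpace.norm_rankOne]
  simp [EuclideanSpace.norm_eq]

theorem norm_sq_toLp_mulVec_single {ι : Type*} [Fintype ι] [DecidableEq ι] (A : Matrix ι ι ℝ)
    (z : ι) : ‖WithLp.toLp 2 (A *ᵥ Pi.single z 1)‖ ^ 2 = (Aᵀ * A) z z := by
  rw [EuclideanSpace.real_norm_sq_eq]
  simp [mul_apply, sq]

theorem norm_sq_toLp_single_vecMul {ι : Type*} [Fintype ι] [DecidableEq ι] (B : Matrix ι ι ℝ)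
    (z : ι) : ‖WithLp.toLp 2 (Pi.single z 1 ᵥ* B)‖ ^ 2 = (B * Bᵀ) z z := by
  rw [EuclideanSpace.real_norm_sq_eq]
  simp [mul_apply, sq]

theorem norm_toEuclideanCLM_mul_vecMulVec_single_mul_le {ι : Type*} [Fintype ι] [DecidableEq ι]
    (A B : Matrix ι ι ℝ) (z : ι) :
    ‖toEuclideanCLM (n := ι) (𝕜 := ℝ) (A * vecMulVec (Pi.single z 1) (Pi.single z 1) * B)‖ ≤
      (Aᵀ * A) z z + (B * Bᵀ) z z := by
  rw [mul_vecMulVec, vecMulVec_mul, norm_toEuclideanCLM_vecMulVec,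
    ← norm_sq_toLp_mulVec_single, ← norm_sq_toLp_single_vecMul]
  nlinarith [two_mul_le_add_sq ‖WithLp.toLp 2 (A *ᵥ Pi.single z 1)‖
    ‖WithLp.toLp 2 (Pi.single z 1 ᵥ* B)‖, norm_nonneg (WithLp.toLp 2 (A *ᵥ Pi.single z 1)),
    norm_nonneg (WithLp.toLp 2 (Pi.single z 1 ᵥ* B))]

theorem stmt_14 (n : ℕ) (hn : 1 ≤ n) (a b v : ℝ) (ha : 0 < a) (hb : 0 < b) (hv : 0 ≤ v)
    (nabla : Matrix (Fin n) (Fin n) ℝ)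
    (hnabla : nabla = Matrix.of fun i j : Fin n =>
      if i = j then 1 else if (j : ℕ) + 1 = (i : ℕ) then -1 else 0)
    (G : ℝ → Matrix (Fin n) (Fin n) ℝ)
    (hG : ∀ c, G c = (c / n) • (1 : Matrix (Fin n) (Fin n) ℝ) + v • (nabla * nablaᵀ))
    (R : Matrix (Fin n) (Fin n) ℝ)
    (hR : R = Matrix.of fun i j : Fin n => if (i : ℕ) = 0 ∧ (j : ℕ) = 0 then 1 else 0)
    (Sa Sb : Matrix (Fin n) (Fin n) ℝ)
    (hSa : Sa.PosSemidef) (hSb : Sb.PosSemidef)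
    (hSa2 : Sa * Sa = (G a)⁻¹) (hSb2 : Sb * Sb = (G b)⁻¹) :
    ‖Matrix.toEuclideanCLM (𝕜 := ℝ) (Sa * R * Sb)‖ ≤
      4 / (2 * n + 1) *
        ∑ k : Fin n,
          (1 / (a / n + 2 * v * (1 - Real.cos (2 * (Real.pi / (2 * n + 1) * (((k : ℕ) + 1 : ℝ) - 1 / 2))))) +
           1 / (b / n + 2 * v * (1 - Real.cos (2 * (Real.pi / (2 * n + 1) * (((k : ℕ) + 1 : ℝ) - 1 / 2)))))) := by
  obtain rfl : nabla = backwardDiff ℝ n := hnabla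
  let z : Fin n := ⟨0, hn⟩
  have hRz : R = vecMulVec (Pi.single z 1) (Pi.single z 1) := by
    ext i j
    simp only [hR, of_apply, vecMulVec_apply, Pi.single_apply, Fin.ext_iff, z]
    split_ifs <;> simp_all
  have hSaT : Saᵀ = Sa := (isHermitian_iff_isSymm.mp hSa.isHermitian).eq
  have hSbT : Sbᵀ = Sb := (isHermitian_iff_isSymm.mp hSb.isHermitian).eq
  calc _ ≤ (Saᵀ * Sa) z z + (Sb * Sbᵀ) z z :=
        hRz ▸ norm_toEuclideanCLM_mul_vecMulVec_single_mul_le Sa Sb z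
    _ = (G a)⁻¹ z z + (G b)⁻¹ z z := by rw [hSaT, hSbT, hSa2, hSb2]
    _ ≤ 4 / (2 * n + 1) * ∑ k : Fin n, 1 / symbol n v a (2 * dctAngle n k) +
        4 / (2 * n + 1) * ∑ k : Fin n, 1 / symbol n v b (2 * dctAngle n k) := by
      rw [hG, hG]
      exact add_le_add (inv_smul_one_add_smul_apply_self_le hv ha z)
        (inv_smul_one_add_smul_apply_self_le hv hb z)
    _ = _ := by rw [← mul_add, ← Finset.sum_add_distrib]; rfl
end

section
/- Let φ_a denote the centered normal density with variance a > 0 and let I, J > 0. Then ∫_0^∞ z² (∫_0^∞ φ_I(x) φ_J(z−x) dx) dz = (I+J)/2 − ((I+J)/(2π))·arctan(√(J/I)) + √(IJ)/(2π). -/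
/-!
Write `I = a²`, `J = b²` and `c² = a² + b²`. Completing the square in `x`, the inner integral
is `(a b / c) e^{-z²/(2c²)} Φ(a z / (b c))`, with `Φ` the unnormalised standard normal
distribution function, and the substitution `z = c w` turns the outer integral into
`c² / (2π) · H(a / b)`, where `H t = ∫₀^∞ w² e^{-w²/2} Φ(t w) dw`. Differentiating under the
integral sign, `H' t = ∫₀^∞ w³ e^{-(1 + t²) w²/2} dw = 2 / (1 + t²)²`, and `H 0 = π / 2`, so
`H t = π / 2 + arctan t + t / (1 + t²)`; finally `arctan (a / b) = π / 2 - arctan (b / a)`.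
-/

open MeasureTheory Real Set Filter

section VectorValued

variable {E : Type*} [NormedAddCommGroup E] [NormedSpace ℝ E]

theorem integral_comp_sub_right_Ioi (f : ℝ → E) (a c : ℝ) :
    ∫ x in Ioi a, f (x - c) = ∫ y in Ioi (a - c), f y := by
  have := (measurePreserving_sub_right volume c).setIntegral_preimage_emb
    (measurableEmbedding_subRight c) f (Ioi (a - c))
  rwa [preimage_sub_const_Ioi, sub_add_cancel] at this

theorem integral_comp_sub_div_Ioi (f : ℝ → E) (a m : ℝ) {s : ℝ} (hs : 0 < s) :
    ∫ x in Ioi a, f ((x - m) / s) = s • ∫ y in Ioi ((a - m) / s), f y := by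
  simp_rw [div_eq_inv_mul]
  rw [integral_comp_sub_right_Ioi (fun x => f (s⁻¹ * x)),
    integral_comp_mul_left_Ioi f _ (inv_pos.mpr hs), inv_inv]

theorem hasDerivAt_integral_Iic [CompleteSpace E] {f : ℝ → E} (hf : Integrable f)
    (hc : Continuous f) (a : ℝ) : HasDerivAt (fun t => ∫ x in Iic t, f x) (f a) a := by
  have hsplit : (fun t => ∫ x in Iic t, f x) =
      fun t => (∫ x in Iic 0, f x) + ∫ x in 0..t, f x := by
    ext t
    rw [← intervalIntegral.integral_Iic_sub_Iic hf.integrableOn hf.integrableOn]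
    abel
  rw [hsplit]
  exact (intervalIntegral.integral_hasDerivAt_right hf.intervalIntegrable
    hc.aestronglyMeasurable.stronglyMeasurableAtFilter hc.continuousAt).const_add _

end VectorValued

theorem integral_Ioi_pow_mul_exp_neg_mul_sq (n : ℕ) {b : ℝ} (hb : 0 < b) :
    ∫ x in Ioi (0 : ℝ), x ^ n * exp (-b * x ^ 2) =
      b ^ (-((n : ℝ) + 1) / 2) * (1 / 2) * Gamma (((n : ℝ) + 1) / 2) := by
  rw [← integral_rpow_mul_exp_neg_mul_rpow two_pos (by linarith [n.cast_nonneg (α := ℝ)]) hb]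
  refine setIntegral_congr_fun measurableSet_Ioi fun x _ => ?_
  norm_cast

theorem integrableOn_Ioi_pow_mul_exp_neg_mul_sq (n : ℕ) {b : ℝ} (hb : 0 < b) :
    IntegrableOn (fun x : ℝ => x ^ n * exp (-b * x ^ 2)) (Ioi 0) := by
  refine (integrableOn_rpow_mul_exp_neg_mul_sq hb
    (by linarith [n.cast_nonneg (α := ℝ)] : -1 < (n : ℝ))).congr_fun
    (fun x _ => ?_) measurableSet_Ioi
  norm_cast

theorem integral_Ioi_sq_mul_exp_neg_mul_sq {b : ℝ} (hb : 0 < b) :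
    ∫ x in Ioi (0 : ℝ), x ^ 2 * exp (-b * x ^ 2) = √(π / b) / (4 * b) := by
  rw [integral_Ioi_pow_mul_exp_neg_mul_sq 2 hb]
  have hG : Gamma (3 / 2) = √π / 2 := by
    rw [show (3 / 2 : ℝ) = 1 / 2 + 1 by norm_num, Gamma_add_one (by norm_num), Gamma_one_half_eq]
    ring
  have hb32 : b ^ (-(3 : ℝ) / 2) = (b * √b)⁻¹ := by
    rw [show -(3 : ℝ) / 2 = -(1 + 1 / 2) by norm_num, rpow_neg hb.le, rpow_add hb, rpow_one,
      ← sqrt_eq_rpow]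
  push_cast
  rw [show ((2 : ℝ) + 1) = 3 by norm_num, hG, hb32, sqrt_div' _ hb.le]
  field_simp
  norm_num

theorem integral_Ioi_cube_mul_exp_neg_mul_sq {b : ℝ} (hb : 0 < b) :
    ∫ x in Ioi (0 : ℝ), x ^ 3 * exp (-b * x ^ 2) = 1 / (2 * b ^ 2) := by
  rw [integral_Ioi_pow_mul_exp_neg_mul_sq 3 hb]
  norm_num

theorem exp_neg_sq_div_two (w : ℝ) : exp (-w ^ 2 / 2) = exp (-(1 / 2) * w ^ 2) := by
  ring_nf

/-- `√(2π)` times the standard normal distribution function. -/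
noncomputable def gaussCdf (a : ℝ) : ℝ := ∫ s in Iic a, exp (-s ^ 2 / 2)

theorem integrable_exp_neg_sq_div_two : Integrable fun s : ℝ => exp (-s ^ 2 / 2) := by
  simp_rw [exp_neg_sq_div_two]
  exact integrable_exp_neg_mul_sq (by norm_num)

theorem hasDerivAt_gaussCdf (a : ℝ) : HasDerivAt gaussCdf (exp (-a ^ 2 / 2)) a :=
  hasDerivAt_integral_Iic integrable_exp_neg_sq_div_two (by fun_prop) a

theorem continuous_gaussCdf : Continuous gaussCdf :=
  continuous_iff_continuousAt.mpr fun a => (hasDerivAt_gaussCdf a).continuousAt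

theorem gaussCdf_nonneg (a : ℝ) : 0 ≤ gaussCdf a :=
  setIntegral_nonneg measurableSet_Iic fun _ _ => (exp_pos _).le

theorem gaussCdf_le (a : ℝ) : gaussCdf a ≤ √(2 * π) := by
  calc gaussCdf a ≤ ∫ s, exp (-s ^ 2 / 2) :=
        setIntegral_le_integral integrable_exp_neg_sq_div_two (.of_forall fun _ => (exp_pos _).le)
    _ = √(2 * π) := by
        simp_rw [exp_neg_sq_div_two, integral_gaussian, div_div_eq_mul_div, div_one, mul_comm]

theorem gaussCdf_eq_integral_Ioi (a : ℝ) : gaussCdf a = ∫ s in Ioi (-a), exp (-s ^ 2 / 2) := by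
  simp only [gaussCdf, ← integral_comp_neg_Iic, neg_sq]

theorem gaussCdf_zero : gaussCdf 0 = √(2 * π) / 2 := by
  rw [gaussCdf_eq_integral_Ioi, neg_zero]
  simp_rw [exp_neg_sq_div_two, integral_gaussian_Ioi, div_div_eq_mul_div, div_one, mul_comm]

theorem integral_Ioi_gaussian_mul_gaussian_sub {a b c : ℝ} (ha : 0 < a) (hb : 0 < b) (hc : 0 < c)
    (habc : a ^ 2 + b ^ 2 = c ^ 2) (z : ℝ) :
    ∫ x in Ioi (0 : ℝ), exp (-x ^ 2 / (2 * a ^ 2)) * exp (-(z - x) ^ 2 / (2 * b ^ 2)) =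
      a * b / c * exp (-z ^ 2 / (2 * c ^ 2)) * gaussCdf (a * z / (b * c)) := by
  have hsquare : ∀ x, exp (-x ^ 2 / (2 * a ^ 2)) * exp (-(z - x) ^ 2 / (2 * b ^ 2)) =
      exp (-z ^ 2 / (2 * c ^ 2)) * exp (-((x - a ^ 2 * z / c ^ 2) / (a * b / c)) ^ 2 / 2) := by
    intro x
    rw [← exp_add, ← exp_add]
    congr 1
    rw [div_pow, div_pow (a * b), ← habc]
    field_simp
    ring
  have hlower : (0 - a ^ 2 * z / c ^ 2) / (a * b / c) = -(a * z / (b * c)) := by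
    field_simp
    ring
  simp_rw [hsquare]
  rw [integral_const_mul,
    integral_comp_sub_div_Ioi (fun y => exp (-y ^ 2 / 2)) 0 _ (by positivity), hlower,
    ← gaussCdf_eq_integral_Ioi, smul_eq_mul]
  ring

noncomputable def sqMomentGaussCdf (t : ℝ) : ℝ :=
  ∫ w in Ioi (0 : ℝ), w ^ 2 * exp (-w ^ 2 / 2) * gaussCdf (t * w)

theorem integrableOn_sq_mul_exp_mul_gaussCdf (t : ℝ) :
    IntegrableOn (fun w => w ^ 2 * exp (-w ^ 2 / 2) * gaussCdf (t * w)) (Ioi 0) := by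
  refine Integrable.mono' ((integrableOn_Ioi_pow_mul_exp_neg_mul_sq 2
    (by norm_num : (0 : ℝ) < 1 / 2)).const_mul √(2 * π))
    (by have := continuous_gaussCdf; fun_prop) (.of_forall fun w => ?_)
  rw [norm_of_nonneg (by have := gaussCdf_nonneg (t * w); positivity), ← exp_neg_sq_div_two,
    mul_comm √(2 * π)]
  exact mul_le_mul_of_nonneg_left (gaussCdf_le _) (by positivity)

theorem integral_Ioi_sq_mul_exp_mul_gaussCdf {c : ℝ} (hc : 0 < c) (k : ℝ) :
    ∫ z in Ioi (0 : ℝ), z ^ 2 * exp (-z ^ 2 / (2 * c ^ 2)) * gaussCdf (k * z) =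
      c ^ 3 * sqMomentGaussCdf (k * c) := by
  have hscale : ∀ z, z ^ 2 * exp (-z ^ 2 / (2 * c ^ 2)) * gaussCdf (k * z) =
      c ^ 2 * ((c⁻¹ * z) ^ 2 * exp (-(c⁻¹ * z) ^ 2 / 2) *
        gaussCdf (k * c * (c⁻¹ * z))) := by
    intro z
    rw [show k * c * (c⁻¹ * z) = k * z by field_simp]
    field_simp
  simp_rw [hscale]
  rw [integral_const_mul, integral_comp_mul_left_Ioi
    (fun w => w ^ 2 * exp (-w ^ 2 / 2) * gaussCdf (k * c * w)) 0 (inv_pos.mpr hc), inv_inv,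
    mul_zero, smul_eq_mul, sqMomentGaussCdf]
  ring

theorem hasDerivAt_sqMomentGaussCdf (t : ℝ) :
    HasDerivAt sqMomentGaussCdf (2 / (1 + t ^ 2) ^ 2) t := by
  have hleibniz := hasDerivAt_integral_of_dominated_loc_of_deriv_le
    (μ := volume.restrict (Ioi 0))
    (F := fun t w => w ^ 2 * exp (-w ^ 2 / 2) * gaussCdf (t * w))
    (F' := fun t w => w ^ 3 * exp (-w ^ 2 / 2) * exp (-(t * w) ^ 2 / 2))
    (bound := fun w => w ^ 3 * exp (-(1 / 2) * w ^ 2)) (x₀ := t) univ_mem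
    (.of_forall fun _ => by have := continuous_gaussCdf; fun_prop)
    (integrableOn_sq_mul_exp_mul_gaussCdf t) (by fun_prop)
    ((ae_restrict_iff' measurableSet_Ioi).mpr (.of_forall fun w (hw : 0 < w) s _ => by
      rw [norm_of_nonneg (by positivity), ← exp_neg_sq_div_two]
      exact mul_le_of_le_one_right (by positivity) (exp_le_one_iff.mpr (by nlinarith))))
    (integrableOn_Ioi_pow_mul_exp_neg_mul_sq 3 (by norm_num))
    (.of_forall fun w s _ => by
      refine (((hasDerivAt_gaussCdf (s * w)).comp s (hasDerivAt_mul_const w)).const_mul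
        (w ^ 2 * exp (-w ^ 2 / 2))).congr_deriv ?_
      ring)
  have hpos : 0 < (1 + t ^ 2) / 2 := by positivity
  have hvalue : ∫ w in Ioi (0 : ℝ), w ^ 3 * exp (-w ^ 2 / 2) * exp (-(t * w) ^ 2 / 2) =
      2 / (1 + t ^ 2) ^ 2 := by
    rw [← show 1 / (2 * ((1 + t ^ 2) / 2) ^ 2) = 2 / (1 + t ^ 2) ^ 2 by field_simp,
      ← integral_Ioi_cube_mul_exp_neg_mul_sq hpos]
    refine setIntegral_congr_fun measurableSet_Ioi fun w _ => ?_
    rw [mul_assoc, ← exp_add]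
    ring_nf
  exact hvalue ▸ hleibniz.2

theorem sqMomentGaussCdf_zero : sqMomentGaussCdf 0 = π / 2 := by
  simp_rw [sqMomentGaussCdf, zero_mul, gaussCdf_zero, exp_neg_sq_div_two]
  rw [integral_mul_const, integral_Ioi_sq_mul_exp_neg_mul_sq (by norm_num : (0 : ℝ) < 1 / 2)]
  rw [show π / (1 / 2) = 2 * π by ring]
  linear_combination mul_self_sqrt (by positivity : (0 : ℝ) ≤ 2 * π) / 4

theorem sqMomentGaussCdf_eq (t : ℝ) :
    sqMomentGaussCdf t = π / 2 + arctan t + t / (1 + t ^ 2) := by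
  have hderiv : ∀ s : ℝ, HasDerivAt (fun t => π / 2 + arctan t + t / (1 + t ^ 2))
      (2 / (1 + s ^ 2) ^ 2) s := by
    intro s
    have hden : 1 + s ^ 2 ≠ 0 := by positivity
    refine (((hasDerivAt_arctan s).const_add (π / 2)).add ((hasDerivAt_id' s).div
      (((hasDerivAt_pow 2 s).const_add 1)) hden)).congr_deriv ?_
    field_simp
    ring
  refine congrFun (eq_of_fderiv_eq (𝕜 := ℝ)
    (fun s => (hasDerivAt_sqMomentGaussCdf s).differentiableAt)
    (fun s => (hderiv s).differentiableAt) (fun s => ?_) 0 ?_) t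
  · rw [(hasDerivAt_sqMomentGaussCdf s).hasFDerivAt.fderiv, (hderiv s).hasFDerivAt.fderiv]
  · simp [sqMomentGaussCdf_zero]

theorem stmt_17 (I J : ℝ) (hI : 0 < I) (hJ : 0 < J) :
    (∫ z in Set.Ioi (0 : ℝ), z ^ 2 *
        ∫ x in Set.Ioi (0 : ℝ),
          (Real.exp (-x ^ 2 / (2 * I)) / Real.sqrt (2 * Real.pi * I)) *
            (Real.exp (-(z - x) ^ 2 / (2 * J)) / Real.sqrt (2 * Real.pi * J))) =
      (I + J) / 2 - (I + J) / (2 * Real.pi) * Real.arctan (Real.sqrt (J / I)) +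
        Real.sqrt (I * J) / (2 * Real.pi) := by
  obtain ⟨a, ha, rfl⟩ : ∃ a, 0 < a ∧ a ^ 2 = I := ⟨√I, sqrt_pos.2 hI, sq_sqrt hI.le⟩
  obtain ⟨b, hb, rfl⟩ : ∃ b, 0 < b ∧ b ^ 2 = J := ⟨√J, sqrt_pos.2 hJ, sq_sqrt hJ.le⟩
  obtain ⟨c, hc, habc⟩ : ∃ c, 0 < c ∧ a ^ 2 + b ^ 2 = c ^ 2 :=
    ⟨√(a ^ 2 + b ^ 2), by positivity, (sq_sqrt (by positivity)).symm⟩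
  have hnorm : √(2 * π * a ^ 2) * √(2 * π * b ^ 2) = 2 * π * a * b := by
    rw [sqrt_mul' _ (sq_nonneg a), sqrt_mul' _ (sq_nonneg b), sqrt_sq ha.le, sqrt_sq hb.le]
    linear_combination a * b * mul_self_sqrt (by positivity : (0 : ℝ) ≤ 2 * π)
  have hinner : ∀ z, z ^ 2 * ∫ x in Ioi (0 : ℝ),
      (exp (-x ^ 2 / (2 * a ^ 2)) / √(2 * π * a ^ 2)) *
        (exp (-(z - x) ^ 2 / (2 * b ^ 2)) / √(2 * π * b ^ 2)) =
      1 / (2 * π * c) * (z ^ 2 * exp (-z ^ 2 / (2 * c ^ 2)) * gaussCdf (a / (b * c) * z)) := by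
    intro z
    simp_rw [div_mul_div_comm _ (√(2 * π * a ^ 2)), hnorm, integral_div,
      integral_Ioi_gaussian_mul_gaussian_sub ha hb hc habc,
      show a * z / (b * c) = a / (b * c) * z by ring]
    field_simp
  simp_rw [hinner]
  rw [integral_const_mul, integral_Ioi_sq_mul_exp_mul_gaussCdf hc, sqMomentGaussCdf_eq,
    show a / (b * c) * c = a / b by field_simp, div_pow, sqrt_div' _ (sq_nonneg a),
    sqrt_sq ha.le, sqrt_sq hb.le, ← mul_pow, sqrt_sq (by positivity), habc,
    ← inv_div a b, arctan_inv_of_pos (by positivity)]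
  field_simp
  linear_combination (-2 * a * b) * habc
end
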